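/- For every a ∈ (0,1) and every (z,w) ∈ ℂ² with |z|² + |w| < 1 (i.e., (z,w) in the ellipsoid E(1,1/2)), the expression (a²(z−1))² + a²(a²−1)w + (1−a²)² is nonzero. -/

import Mathlib

theorem stmt16 (a : ℝ) (ha : a ∈ Set.Ioo (0:ℝ) 1) (z w : ℂ)
    (hzw : ‖z‖ ^ 2 + ‖w‖ < 1) :
    ((a:ℂ)^2*(z - 1))^2 + (a:ℂ)^2*((a:ℂ)^2 - 1)*w + (1 - (a:ℂ)^2)^2 ≠ 0 := by
  obtain ⟨ha0, ha1⟩ := ha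
  intro heq
  set t : ℝ := a ^ 2 with ht
  have ht0 : 0 < t := by positivity
  have ht1 : t < 1 := by nlinarith
  set x : ℝ := z.re with hx
  set y : ℝ := z.im with hy
  have hz : z = (x:ℂ) + (y:ℂ) * Complex.I := (Complex.re_add_im z).symm
  -- the equation for w
  have hw : ((t:ℝ):ℂ) * (1 - (t:ℝ)) * w = ((t:ℝ):ℂ)^2 * (z-1)^2 + (1 - ((t:ℝ):ℂ))^2 := by
    push_cast [ht]
    linear_combination -heq
  have habs : t * (1 - t) * ‖w‖
      = ‖((t:ℝ):ℂ)^2 * (z-1)^2 + (1 - ((t:ℝ):ℂ))^2‖ := by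
    rw [← hw, norm_mul, norm_mul]
    have h1 : ((1:ℂ) - ((t:ℝ):ℂ)) = (((1 - t : ℝ)):ℂ) := by push_cast; ring
    rw [h1, Complex.norm_real, Complex.norm_real, Real.norm_eq_abs, Real.norm_eq_abs,
      abs_of_pos ht0, abs_of_pos (by linarith : (0:ℝ) < 1 - t)]
  have hR2 : ‖z‖ ^ 2 = x ^ 2 + y ^ 2 := by
    rw [Complex.sq_norm, Complex.normSq_apply]; ring
  have hN : ‖((t:ℝ):ℂ)^2 * (z-1)^2 + (1 - ((t:ℝ):ℂ))^2‖ ^ 2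
      = (t^2*((x-1)^2 - y^2) + (1-t)^2)^2 + (2*t^2*y*(x-1))^2 := by
    rw [Complex.sq_norm, Complex.normSq_apply, hz]
    simp [Complex.add_re, Complex.add_im, Complex.mul_re, Complex.mul_im,
      Complex.sub_re, Complex.sub_im, Complex.one_re, Complex.one_im,
      Complex.ofReal_re, Complex.ofReal_im, Complex.I_re, Complex.I_im, pow_two]
    ring
  have hWnn : 0 ≤ ‖w‖ := norm_nonneg w
  have hr1 : x ^ 2 + y ^ 2 ≤ 1 := by
    rw [← hR2]; nlinarith
  have hx1 : x ^ 2 ≤ 1 := by nlinarith [sq_nonneg y]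
  have hxle : x ≤ 1 := by nlinarith
  have hxge : -1 ≤ x := by nlinarith
  -- key strict bound
  have hlt : t * (1 - t) * ‖w‖ < t * (1 - t) * (1 - (x^2 + y^2)) := by
    have : ‖w‖ < 1 - (x^2+y^2) := by rw [← hR2]; linarith
    have hpos : 0 < t * (1 - t) := mul_pos ht0 (by linarith)
    exact mul_lt_mul_of_pos_left this hpos
  have hNlt : (t^2*((x-1)^2 - y^2) + (1-t)^2)^2 + (2*t^2*y*(x-1))^2
      < (t * (1 - t) * (1 - (x^2 + y^2)))^2 := by
    have h0 : 0 ≤ t * (1 - t) * ‖w‖ :=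
      mul_nonneg (mul_nonneg ht0.le (by linarith)) (norm_nonneg w)
    have hsq : (t * (1 - t) * ‖w‖)^2 < (t * (1 - t) * (1 - (x^2 + y^2)))^2 := by
      exact pow_lt_pow_left₀ hlt h0 (by norm_num)
    rw [habs, hN] at hsq
    exact hsq
  have key : (t^2*((x-1)^2 - y^2) + (1-t)^2)^2 + (2*t^2*y*(x-1))^2
      - (t * (1 - t) * (1 - (x^2 + y^2)))^2
      = (t^2*((x-1)^2 + y^2) - (1-t)^2)^2
        + t^2*(1-t)^2*((1-x)^3*(3+x))
        + t^2*(1-t)^2*(y^2*(1-x^2))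
        + t^2*(1-t)^2*(y^2*(1-x^2-y^2)) := by ring
  have h1 : 0 ≤ (t^2*((x-1)^2 + y^2) - (1-t)^2)^2 := sq_nonneg _
  have hcc : (0:ℝ) ≤ t^2*(1-t)^2 := mul_nonneg (sq_nonneg t) (sq_nonneg (1-t))
  have h2 : 0 ≤ t^2*(1-t)^2*((1-x)^3*(3+x)) :=
    mul_nonneg hcc (mul_nonneg (pow_nonneg (by linarith) 3) (by linarith))
  have h3 : 0 ≤ t^2*(1-t)^2*(y^2*(1-x^2)) :=
    mul_nonneg hcc (mul_nonneg (sq_nonneg y) (by linarith))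
  have h4 : 0 ≤ t^2*(1-t)^2*(y^2*(1-x^2-y^2)) :=
    mul_nonneg hcc (mul_nonneg (sq_nonneg y) (by linarith))
  linarith
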